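/- Let m > 0 and t_f > 0, and consider the constant-risk case I0 = 1, in which the restricted disutility of a delay strategy x against any population strategy is f(x) = 1 − exp(x − t_f)·(1 − x/m). Then f attains its global minimum on [0, t_f] at the unique point x* = min(t_f, max(m − 1, 0)): for all y ∈ [0, t_f] with y ≠ x*, f(x*) < f(y). -/

import Mathlib

lemma stmt12_deriv (m tf x : ℝ) (hm : m ≠ 0) :
    HasDerivAt (fun x => Real.exp (x - tf) * (1 - x / m))
      (Real.exp (x - tf) * ((m - 1 - x) / m)) x := by
  have h1 : HasDerivAt (fun x : ℝ => Real.exp (x - tf)) (Real.exp (x - tf)) x := by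
    simpa using ((hasDerivAt_id x).sub_const tf).exp
  have h2 : HasDerivAt (fun x : ℝ => 1 - x / m) (-(1 / m)) x := by
    simpa using ((hasDerivAt_id x).div_const m).const_sub 1
  have : HasDerivAt (fun x => Real.exp (x - tf) * (1 - x / m))
      (Real.exp (x - tf) * (1 - x / m) + Real.exp (x - tf) * -(1 / m)) x := h1.mul h2
  convert this using 1
  field_simp [hm]
  ring

lemma stmt12_mono (m tf : ℝ) (hm : 0 < m) :
    StrictMonoOn (fun x => Real.exp (x - tf) * (1 - x / m)) (Set.Iic (m - 1)) := by
  apply StrictMonoOn.mono (s := Set.Iic (m-1)) ?_ le_rfl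
  apply strictMonoOn_of_deriv_pos (convex_Iic _)
  · exact Continuous.continuousOn (by continuity)
  · intro x hx
    rw [interior_Iic] at hx
    rw [(stmt12_deriv m tf x hm.ne').deriv]
    have : 0 < m - 1 - x := by simp at hx; linarith
    positivity

lemma stmt12_anti (m tf : ℝ) (hm : 0 < m) :
    StrictAntiOn (fun x => Real.exp (x - tf) * (1 - x / m)) (Set.Ici (m - 1)) := by
  apply strictAntiOn_of_deriv_neg (convex_Ici _)
  · exact Continuous.continuousOn (by continuity)
  · intro x hx
    rw [interior_Ici] at hx
    rw [(stmt12_deriv m tf x hm.ne').deriv]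
    simp at hx
    have h1 : (m - 1 - x) / m < 0 := div_neg_of_neg_of_pos (by linarith) hm
    have := Real.exp_pos (x - tf)
    nlinarith

/-- In the constant-risk case `I0 = 1`, the disutility
`f(x) = 1 - exp(x - t_f)(1 - x/m)` attains its strict global minimum on `[0, t_f]`
at the unique point `x* = min(t_f, max(m - 1, 0))`. -/
theorem stmt12 (m tf : ℝ) (hm : 0 < m) (htf : 0 < tf) :
    ∀ y ∈ Set.Icc (0:ℝ) tf, y ≠ min tf (max (m - 1) 0) →
      1 - Real.exp (min tf (max (m - 1) 0) - tf) * (1 - min tf (max (m - 1) 0) / m)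
        < 1 - Real.exp (y - tf) * (1 - y / m) := by
  intro y hy hne
  obtain ⟨hy0, hytf⟩ := hy
  set x := min tf (max (m - 1) 0) with hx
  have key : Real.exp (y - tf) * (1 - y / m) < Real.exp (x - tf) * (1 - x / m) := by
    rcases lt_or_gt_of_ne hne with h | h
    · -- y < x : use mono on Iic (m-1)
      have hxpos : 0 < x := lt_of_le_of_lt hy0 h
      have hmax : 0 < max (m - 1) 0 := lt_of_lt_of_le hxpos (min_le_right _ _)
      have hm1 : 0 < m - 1 := by
        by_contra hc
        push_neg at hc
        simp [max_eq_right hc] at hmax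
      have hxle : x ≤ m - 1 := le_trans (min_le_right _ _) (by simp [max_eq_left hm1.le])
      exact stmt12_mono m tf hm (le_trans h.le hxle) hxle h
    · -- x < y : use anti on Ici (m-1)
      have hxge : m - 1 ≤ x := by
        have hxlt : x < tf := lt_of_lt_of_le h hytf
        have : x = max (m - 1) 0 := by
          rcases min_cases tf (max (m - 1) 0) with ⟨h1, h2⟩ | ⟨h1, h2⟩
          · rw [hx, h1] at hxlt ⊢; linarith
          · rw [hx]; exact h1
        rw [this]; exact le_max_left _ _
      exact stmt12_anti m tf hm hxge (le_trans hxge h.le) h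
  linarith
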